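/- For λ ≠ 0, the map Φ(x,y,u,p,q) = (y, x, λu, λq, λp) on C^5 transforms the PDE system u_{11} = p², u_{12} = 0, u_{22} = λq² into the system u_{11} = p², u_{12} = 0, u_{22} = (1/λ)q²; i.e. it maps the pair of distributions (E_λ, V) of S_λ onto the pair (E_{1/λ}, V) of S_{1/λ}, where E_μ = span{∂_x + p∂_u + p²∂_p, ∂_y + q∂_u + μq²∂_q} and V = span{∂_p, ∂_q}. -/

import Mathlib

/-- `D_1 = ∂_x + p∂_u + p²∂_p` for the system `S_μ`.
Coordinates on `ℂ^5`: `(x, y, u, p, q) = (z 0, z 1, z 2, z 3, z 4)`. -/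
noncomputable def D1 : (Fin 5 → ℂ) → Fin 5 → ℂ :=
  fun z => ![1, 0, z 3, (z 3) ^ 2, 0]

/-- `D_2 = ∂_y + q∂_u + μq²∂_q` for the system `S_μ`. -/
noncomputable def D2 (mu : ℂ) : (Fin 5 → ℂ) → Fin 5 → ℂ :=
  fun z => ![0, 1, z 4, 0, mu * (z 4) ^ 2]

/-- The map `Φ(x,y,u,p,q) = (y, x, λu, λq, λp)`. -/
noncomputable def PhiS (lam : ℂ) : (Fin 5 → ℂ) → Fin 5 → ℂ :=
  fun z => ![z 1, z 0, lam * z 2, lam * z 4, lam * z 3]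

/-- `PhiS lam` as a linear map. -/
noncomputable def PhiL (lam : ℂ) : (Fin 5 → ℂ) →ₗ[ℂ] (Fin 5 → ℂ) where
  toFun := PhiS lam
  map_add' := by
    intro a b
    funext i
    fin_cases i <;> simp [PhiS] <;> ring
  map_smul' := by
    intro c a
    funext i
    fin_cases i <;> simp [PhiS] <;> ring

lemma fderiv_PhiS (lam : ℂ) (z : Fin 5 → ℂ) :
    fderiv ℂ (PhiS lam) z = (PhiL lam).toContinuousLinearMap := by
  have h : PhiS lam = ⇑(PhiL lam).toContinuousLinearMap := rfl
  rw [h, ContinuousLinearMap.fderiv]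

lemma span_smul_pair (c : ℂ) (hc : c ≠ 0) (x y : Fin 5 → ℂ) :
    Submodule.span ℂ {c • x, c • y} = Submodule.span ℂ {x, y} := by
  apply le_antisymm
  · rw [Submodule.span_le]
    rintro v (rfl | rfl)
    · exact Submodule.smul_mem _ c (Submodule.subset_span (by simp))
    · exact Submodule.smul_mem _ c (Submodule.subset_span (by simp))
  · rw [Submodule.span_le]
    rintro v (rfl | rfl)
    · have hx : (c • v) ∈ Submodule.span ℂ {c • v, c • y} := Submodule.subset_span (by simp)
      simpa [smul_smul, inv_mul_cancel₀ hc] using Submodule.smul_mem _ c⁻¹ hx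
    · have hx : (c • v) ∈ Submodule.span ℂ {c • x, c • v} := Submodule.subset_span (by simp)
      simpa [smul_smul, inv_mul_cancel₀ hc] using Submodule.smul_mem _ c⁻¹ hx

theorem S_lambda_equiv_S_inv_lambda (lam : ℂ) (hlam : lam ≠ 0) :
    ∀ z : Fin 5 → ℂ,
      Submodule.map (fderiv ℂ (PhiS lam) z).toLinearMap (Submodule.span ℂ {D1 z, D2 lam z})
        = Submodule.span ℂ {D1 (PhiS lam z), D2 (1 / lam) (PhiS lam z)} ∧
      Submodule.map (fderiv ℂ (PhiS lam) z).toLinearMap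
          (Submodule.span ℂ {(Pi.single 3 1 : Fin 5 → ℂ), Pi.single 4 1})
        = Submodule.span ℂ {(Pi.single 3 1 : Fin 5 → ℂ), Pi.single 4 1} := by
  intro z
  rw [fderiv_PhiS]
  constructor
  · rw [Submodule.map_span, Set.image_pair]
    have h1 : (PhiL lam).toContinuousLinearMap (D1 z) = D2 (1 / lam) (PhiS lam z) := by
      funext i
      fin_cases i <;>
        simp [PhiL, PhiS, D1, D2] <;>
        field_simp <;> ring
    have h2 : (PhiL lam).toContinuousLinearMap (D2 lam z) = D1 (PhiS lam z) := by
      funext i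
      fin_cases i <;>
        simp [PhiL, PhiS, D1, D2] <;>
        ring
    rw [ContinuousLinearMap.coe_coe, h1, h2, Set.pair_comm]
  · rw [Submodule.map_span, Set.image_pair]
    have h3 : (PhiL lam).toContinuousLinearMap (Pi.single 3 1 : Fin 5 → ℂ)
        = lam • (Pi.single 4 1 : Fin 5 → ℂ) := by
      funext i
      fin_cases i <;> simp [PhiL, PhiS]
    have h4 : (PhiL lam).toContinuousLinearMap (Pi.single 4 1 : Fin 5 → ℂ)
        = lam • (Pi.single 3 1 : Fin 5 → ℂ) := by
      funext i
      fin_cases i <;> simp [PhiL, PhiS]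
    rw [ContinuousLinearMap.coe_coe, h3, h4, span_smul_pair lam hlam, Set.pair_comm]
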